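/- Let η₋<η⋆<η₊, Σ>0 and M∈ℝ with α:=2M/Σ²−1≠0. Define b₁=(e^{αη⋆}−e^{αη₊})/D and b₂=(e^{αη⋆}−e^{αη₋})/D, where D=(η₋−η⋆)e^{α(η₋+η⋆)}+(η₊−η₋)e^{α(η₊+η₋)}+(η⋆−η₊)e^{α(η⋆+η₊)}, and a₁=−b₁e^{αη₋}, a₂=−b₂e^{αη₊}. Define φ(η)=a₁+b₁e^{αη} for η₋≤η≤η⋆ and φ(η)=a₂+b₂e^{αη} for η⋆≤η≤η₊ (assuming D≠0). Then: (i) φ(η₋)=0 and φ(η₊)=0; (ii) the two branches agree at η⋆, i.e. a₁+b₁e^{αη⋆}=a₂+b₂e^{αη⋆}; (iii) (Σ²/2)φ''(η)−(M−Σ²/2)φ'(η)=0 on each of the open intervals (η₋,η⋆) and (η⋆,η₊); and (iv) ∫_{η₋}^{η₊} φ(η)dη=1. -/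

import Mathlib

lemma aux_hasDeriv (c d α : ℝ) (x : ℝ) :
    HasDerivAt (fun y => c + d * Real.exp (α * y)) (d * α * Real.exp (α * x)) x := by
  have h := ((hasDerivAt_id x).const_mul α).exp
  simpa [mul_comm, mul_assoc, mul_left_comm] using (h.const_mul d).const_add c

lemma aux_deriv_on (c d α : ℝ) (φ : ℝ → ℝ) (U : Set ℝ) (hU : IsOpen U)
    (heq : ∀ x ∈ U, φ x = c + d * Real.exp (α * x)) :
    ∀ x ∈ U, deriv φ x = d * α * Real.exp (α * x) := by
  intro x hx
  have hev : φ =ᶠ[nhds x] (fun y => c + d * Real.exp (α * y)) :=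
    Filter.eventuallyEq_of_mem (hU.mem_nhds hx) heq
  rw [hev.deriv_eq, (aux_hasDeriv c d α x).deriv]

lemma aux_deriv2 (c d α : ℝ) (φ : ℝ → ℝ) (U : Set ℝ) (hU : IsOpen U)
    (heq : ∀ x ∈ U, φ x = c + d * Real.exp (α * x)) :
    ∀ x ∈ U, deriv (deriv φ) x = d * α * α * Real.exp (α * x) := by
  intro x hx
  have hev : deriv φ =ᶠ[nhds x] (fun y => 0 + d * α * Real.exp (α * y)) := by
    refine Filter.eventuallyEq_of_mem (hU.mem_nhds hx) (fun y hy => ?_)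
    simpa using aux_deriv_on c d α φ U hU heq y hy
  rw [hev.deriv_eq, (aux_hasDeriv 0 (d * α) α x).deriv]

lemma aux_integral (c d α a b : ℝ) (hα0 : α ≠ 0) :
    (∫ x in a..b, (c + d * Real.exp (α * x))) =
      c * (b - a) + d / α * (Real.exp (α * b) - Real.exp (α * a)) := by
  have key : ∀ x : ℝ, HasDerivAt (fun y => c * y + d / α * Real.exp (α * y))
      (c + d * Real.exp (α * x)) x := by
    intro x
    have h1 : HasDerivAt (fun y => c * y) c x := by
      simpa using (hasDerivAt_id x).const_mul c
    have h2 := aux_hasDeriv 0 (d / α) α x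
    have := h1.add (by simpa using h2)
    exact this.congr_deriv (by field_simp)
  have hcont : IntervalIntegrable (fun x => c + d * Real.exp (α * x))
      MeasureTheory.volume a b := by
    apply Continuous.intervalIntegrable
    continuity
  rw [intervalIntegral.integral_eq_sub_of_hasDerivAt (fun x _ => key x) hcont]
  ring

/-- The stationary density of the resetted Brownian motion with drift `M - Σ²/2`
and volatility `Σ` on `[η₋, η₊]`, resetted to `η⋆`: it vanishes at the boundaries,
is continuous at `η⋆`, solves the adjoint equation on each open subinterval, and
has total mass one. -/
theorem stmt4
    (ηminus ηstar ηplus Sig M : ℝ)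
    (h1 : ηminus < ηstar) (h2 : ηstar < ηplus) (hS : 0 < Sig)
    (α : ℝ) (hα : α = 2 * M / Sig ^ 2 - 1) (hα0 : α ≠ 0)
    (D a₁ a₂ b₁ b₂ : ℝ)
    (hD : D = (ηminus - ηstar) * Real.exp (α * (ηminus + ηstar)) +
      (ηplus - ηminus) * Real.exp (α * (ηplus + ηminus)) +
      (ηstar - ηplus) * Real.exp (α * (ηstar + ηplus)))
    (hD0 : D ≠ 0)
    (hb₁ : b₁ = (Real.exp (α * ηstar) - Real.exp (α * ηplus)) / D)
    (hb₂ : b₂ = (Real.exp (α * ηstar) - Real.exp (α * ηminus)) / D)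
    (ha₁ : a₁ = -b₁ * Real.exp (α * ηminus))
    (ha₂ : a₂ = -b₂ * Real.exp (α * ηplus))
    (φ : ℝ → ℝ)
    (hφ : ∀ η, φ η = if η ≤ ηstar then a₁ + b₁ * Real.exp (α * η)
      else a₂ + b₂ * Real.exp (α * η)) :
    φ ηminus = 0 ∧ φ ηplus = 0 ∧
    a₁ + b₁ * Real.exp (α * ηstar) = a₂ + b₂ * Real.exp (α * ηstar) ∧
    (∀ η ∈ Set.Ioo ηminus ηstar,
      Sig ^ 2 / 2 * deriv (deriv φ) η - (M - Sig ^ 2 / 2) * deriv φ η = 0) ∧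
    (∀ η ∈ Set.Ioo ηstar ηplus,
      Sig ^ 2 / 2 * deriv (deriv φ) η - (M - Sig ^ 2 / 2) * deriv φ η = 0) ∧
    (∫ η in ηminus..ηplus, φ η) = 1 := by
  have hS2 : Sig ^ 2 ≠ 0 := pow_ne_zero 2 hS.ne'
  have hkey : Sig ^ 2 / 2 * α = M - Sig ^ 2 / 2 := by
    rw [hα]; field_simp
  -- continuity at ηstar
  have hcont : a₁ + b₁ * Real.exp (α * ηstar) = a₂ + b₂ * Real.exp (α * ηstar) := by
    rw [ha₁, ha₂, hb₁, hb₂]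
    field_simp
    ring
  -- local formulas for φ
  have heq1 : ∀ x ∈ Set.Iio ηstar, φ x = a₁ + b₁ * Real.exp (α * x) := by
    intro x hx; rw [hφ x, if_pos (le_of_lt hx)]
  have heq2 : ∀ x ∈ Set.Ioi ηstar, φ x = a₂ + b₂ * Real.exp (α * x) := by
    intro x hx; rw [hφ x, if_neg (not_le.mpr hx)]
  refine ⟨?_, ?_, hcont, ?_, ?_, ?_⟩
  · rw [hφ, if_pos h1.le, ha₁]; ring
  · rw [hφ, if_neg (not_le.mpr h2), ha₂]; ring
  · intro η hη
    rw [aux_deriv_on a₁ b₁ α φ _ isOpen_Iio heq1 η hη.2,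
      aux_deriv2 a₁ b₁ α φ _ isOpen_Iio heq1 η hη.2]
    linear_combination b₁ * α * Real.exp (α * η) * hkey
  · intro η hη
    rw [aux_deriv_on a₂ b₂ α φ _ isOpen_Ioi heq2 η hη.1,
      aux_deriv2 a₂ b₂ α φ _ isOpen_Ioi heq2 η hη.1]
    linear_combination b₂ * α * Real.exp (α * η) * hkey
  · -- total mass one
    have g1 : Continuous (fun x => a₁ + b₁ * Real.exp (α * x)) := by fun_prop
    have g2 : Continuous (fun x => a₂ + b₂ * Real.exp (α * x)) := by fun_prop
    have e1 : Set.EqOn φ (fun x => a₁ + b₁ * Real.exp (α * x))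
        (Set.uIcc ηminus ηstar) := by
      intro x hx
      rw [Set.uIcc_of_le h1.le] at hx
      rw [hφ x, if_pos hx.2]
    have e2 : Set.EqOn φ (fun x => a₂ + b₂ * Real.exp (α * x))
        (Set.uIcc ηstar ηplus) := by
      intro x hx
      rw [Set.uIcc_of_le h2.le] at hx
      rcases lt_or_eq_of_le hx.1 with h | h
      · rw [hφ x, if_neg (not_le.mpr h)]
      · rw [hφ x, ← h, if_pos le_rfl]
        simpa using hcont
    have i1 : IntervalIntegrable φ MeasureTheory.volume ηminus ηstar :=
      (g1.continuousOn.congr e1).intervalIntegrable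
    have i2 : IntervalIntegrable φ MeasureTheory.volume ηstar ηplus :=
      (g2.continuousOn.congr e2).intervalIntegrable
    rw [← intervalIntegral.integral_add_adjacent_intervals i1 i2,
      intervalIntegral.integral_congr e1, intervalIntegral.integral_congr e2,
      aux_integral a₁ b₁ α _ _ hα0, aux_integral a₂ b₂ α _ _ hα0,
      ha₁, ha₂, hb₁, hb₂]
    field_simp
    rw [hD]
    simp only [mul_add, Real.exp_add]
    ring
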